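/- Let H be a real Hilbert space, C ⊆ H a nonempty convex subset, T, U : C → C nonexpansive maps with a common fixed point p, u, x₀ ∈ C, and (α_n), (β_n) ⊂ [0,1]. Let (x_n) be the alternating Halpern–Mann iteration with anchor u and starting point x₀, and let N ∈ ℕ, N ≥ 1, satisfy N ≥ max{‖x₀ − p‖, 2‖u − p‖}. Let ρ : (0,∞) → ℕ be an antitone function such that for all ε > 0 and all n ≥ ρ(ε), ‖x_n − T(x_n)‖ ≤ ε and ‖x_n − U(x_n)‖ ≤ ε. Then for every ε > 0 and every function Δ : ℕ → (0,1] there exist n ≤ Ψ(ε, Δ) and x ∈ F_N(p, Δ(n)) such that ⟨u − x, x_m − x⟩ ≤ ε for all m ≥ n, where Ψ(ε, Δ) := ρ(Φ(ε, Δ̄)) with Δ̄(η) := Δ(ρ(η)) for η ∈ (0,1], Φ(ε,δ) := φ(ε̃, δ̃)²/(24N) with ε̃ := ε²/(4N²), δ̃(ξ) := min{ δ(ξ²/(24N)), ξ²/(24N) }, φ(ε,δ) := min{ δ^{(i)}(1) : i ≤ r }, and r := ⌈N²/(4ε)⌉. -/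

import Mathlib

open RealInnerProductSpace

/-- `F_N(a, η) = {x ∈ C : ‖x - T x‖ ≤ η, ‖x - U x‖ ≤ η, ‖x - a‖ ≤ N}`. -/
def FN {H : Type*} [NormedAddCommGroup H] (C : Set H) (T U : H → H) (N : ℕ)
    (a : H) (η : ℝ) : Set H :=
  {x | x ∈ C ∧ ‖x - T x‖ ≤ η ∧ ‖x - U x‖ ≤ η ∧ ‖x - a‖ ≤ (N : ℝ)}

/-- `φ(ε, δ) = min{δ⁽ⁱ⁾(1) : i ≤ r}` with `r = ⌈N²/(4ε)⌉`. -/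
noncomputable def phi (N : ℕ) (ε : ℝ) (δ : ℝ → ℝ) : ℝ :=
  (Finset.range (⌈(N : ℝ) ^ 2 / (4 * ε)⌉₊ + 1)).inf' Finset.nonempty_range_add_one
    (fun i => δ^[i] 1)

/-- `Φ(ε, δ) = φ(ε̃, δ̃)²/(24N)` with `ε̃ = ε²/(4N²)` and
`δ̃(ξ) = min{δ(ξ²/(24N)), ξ²/(24N)}`. -/
noncomputable def Phi (N : ℕ) (ε : ℝ) (δ : ℝ → ℝ) : ℝ :=
  (phi N (ε ^ 2 / (4 * (N : ℝ) ^ 2))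
      (fun ξ => min (δ (ξ ^ 2 / (24 * (N : ℝ)))) (ξ ^ 2 / (24 * (N : ℝ))))) ^ 2
    / (24 * (N : ℝ))

/-- `Ψ(ε, Δ) = ρ(Φ(ε, Δ̄))` with `Δ̄(η) = Δ(ρ(η))`. -/
noncomputable def Psi (N : ℕ) (ρ : ℝ → ℕ) (ε : ℝ) (Δ : ℕ → ℝ) : ℕ :=
  ρ (Phi N ε (fun η => Δ (ρ η)))



section geom
variable {H : Type*} [NormedAddCommGroup H] [InnerProductSpace ℝ H]

lemma combo_identity (z v w : H) (t : ℝ) :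
    ‖z - ((1 - t) • v + t • w)‖ ^ 2
      = (1 - t) * ‖z - v‖ ^ 2 + t * ‖z - w‖ ^ 2 - t * (1 - t) * ‖v - w‖ ^ 2 := by
  simp only [← real_inner_self_eq_norm_sq, inner_sub_left, inner_sub_right,
    inner_add_left, inner_add_right, real_inner_smul_left, real_inner_smul_right,
    real_inner_comm v z, real_inner_comm w z, real_inner_comm w v]
  ring

lemma energy_identity (u a b : H) (t : ℝ) :
    ‖u - ((1 - t) • a + t • b)‖ ^ 2
      = ‖u - a‖ ^ 2 - 2 * t * ⟪u - a, b - a⟫ + t ^ 2 * ‖b - a‖ ^ 2 := by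
  simp only [← real_inner_self_eq_norm_sq, inner_sub_left, inner_sub_right,
    inner_add_left, inner_add_right, real_inner_smul_left, real_inner_smul_right,
    real_inner_comm a u, real_inner_comm b u, real_inner_comm b a]
  ring

lemma approx_combo (z a b : H) (t η Nr : ℝ)
    (ht0 : 0 ≤ t) (ht1 : t ≤ 1) (hη0 : 0 ≤ η) (hη1 : η ≤ 1) (hNr : 1 ≤ Nr)
    (hab : ‖a - b‖ ≤ 2 * Nr)
    (h1 : ‖z - a‖ ≤ t * ‖a - b‖ + η)
    (h2 : ‖z - b‖ ≤ (1 - t) * ‖a - b‖ + η) :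
    ‖((1 - t) • a + t • b) - z‖ ^ 2 ≤ 3 * Nr * η := by
  have hid := combo_identity z a b t
  rw [norm_sub_rev, hid]
  set d := ‖a - b‖ with hd
  have hd0 : (0:ℝ) ≤ d := norm_nonneg _
  have e1 : ‖z - a‖ ^ 2 ≤ (t * d + η) ^ 2 := by
    apply pow_le_pow_left₀ (norm_nonneg _) h1
  have e2 : ‖z - b‖ ^ 2 ≤ ((1 - t) * d + η) ^ 2 := by
    apply pow_le_pow_left₀ (norm_nonneg _) h2
  have h4t : 4*t*(1-t)*d*η ≤ d*η := by
    nlinarith [sq_nonneg (1 - 2*t), mul_nonneg hd0 hη0]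
  have hdη : d*η ≤ 2*Nr*η := by nlinarith
  have hη2 : η^2 ≤ Nr*η := by nlinarith
  nlinarith [mul_le_mul_of_nonneg_left e1 (by linarith : (0:ℝ) ≤ 1 - t),
    mul_le_mul_of_nonneg_left e2 ht0]

end geom

noncomputable def dtil (N : ℕ) (ρ : ℝ → ℕ) (Δ : ℕ → ℝ) (ξ : ℝ) : ℝ :=
  min (Δ (ρ (ξ ^ 2 / (24 * (N : ℝ))))) (ξ ^ 2 / (24 * (N : ℝ)))

noncomputable def cseq (N : ℕ) (ρ : ℝ → ℕ) (Δ : ℕ → ℝ) (j : ℕ) : ℝ :=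
  (dtil N ρ Δ)^[j] 1

lemma cseq_succ (N : ℕ) (ρ : ℝ → ℕ) (Δ : ℕ → ℝ) (j : ℕ) :
    cseq N ρ Δ (j + 1) = dtil N ρ Δ (cseq N ρ Δ j) :=
  Function.iterate_succ_apply' _ _ _

lemma cseq_mem {N : ℕ} {ρ : ℝ → ℕ} {Δ : ℕ → ℝ} (hN : (1:ℝ) ≤ (N:ℝ))
    (hΔ : ∀ n, Δ n ∈ Set.Ioc (0 : ℝ) 1) (j : ℕ) :
    0 < cseq N ρ Δ j ∧ cseq N ρ Δ j ≤ 1 := by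
  induction j with
  | zero => exact ⟨one_pos, le_refl 1⟩
  | succ j ih =>
    obtain ⟨h0, h1⟩ := ih
    rw [cseq_succ]
    unfold dtil
    have hpos : 0 < cseq N ρ Δ j ^ 2 / (24 * (N:ℝ)) :=
      div_pos (pow_pos h0 2) (by linarith)
    refine ⟨lt_min (hΔ _).1 hpos, le_trans (min_le_right _ _) ?_⟩
    rw [div_le_one (by linarith)]
    nlinarith

lemma cseq_succ_le_sq (N : ℕ) (ρ : ℝ → ℕ) (Δ : ℕ → ℝ) (j : ℕ) :
    cseq N ρ Δ (j + 1) ≤ cseq N ρ Δ j ^ 2 / (24 * (N:ℝ)) := by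
  rw [cseq_succ]; exact min_le_right _ _

lemma cseq_succ_le_delta (N : ℕ) (ρ : ℝ → ℕ) (Δ : ℕ → ℝ) (j : ℕ) :
    cseq N ρ Δ (j + 1) ≤ Δ (ρ (cseq N ρ Δ j ^ 2 / (24 * (N:ℝ)))) := by
  rw [cseq_succ]; exact min_le_left _ _

lemma cseq_anti {N : ℕ} {ρ : ℝ → ℕ} {Δ : ℕ → ℝ} (hN : (1:ℝ) ≤ (N:ℝ))
    (hΔ : ∀ n, Δ n ∈ Set.Ioc (0 : ℝ) 1) : Antitone (cseq N ρ Δ) := by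
  apply antitone_nat_of_succ_le
  intro j
  obtain ⟨h0, h1⟩ := cseq_mem hN hΔ j
  refine le_trans (cseq_succ_le_sq N ρ Δ j) ?_
  rw [div_le_iff₀ (by linarith)]
  nlinarith

lemma phi_eq {N : ℕ} {ρ : ℝ → ℕ} {Δ : ℕ → ℝ} (hN : (1:ℝ) ≤ (N:ℝ))
    (hΔ : ∀ n, Δ n ∈ Set.Ioc (0 : ℝ) 1) (ε' : ℝ) :
    phi N ε' (dtil N ρ Δ) = cseq N ρ Δ ⌈(N : ℝ) ^ 2 / (4 * ε')⌉₊ := by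
  unfold phi
  apply le_antisymm
  · exact Finset.inf'_le _ (Finset.self_mem_range_succ _)
  · exact Finset.le_inf' _ _ (fun i hi =>
      cseq_anti hN hΔ (Nat.lt_succ_iff.mp (Finset.mem_range.mp hi)))

lemma psi_eq {N : ℕ} {ρ : ℝ → ℕ} {Δ : ℕ → ℝ} (hN : (1:ℝ) ≤ (N:ℝ))
    (hΔ : ∀ n, Δ n ∈ Set.Ioc (0 : ℝ) 1) (ε : ℝ) :
    Psi N ρ ε Δ
      = ρ ((cseq N ρ Δ ⌈(N : ℝ) ^ 2 / (4 * (ε ^ 2 / (4 * (N : ℝ) ^ 2)))⌉₊) ^ 2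
          / (24 * (N : ℝ))) := by
  show ρ ((phi N (ε ^ 2 / (4 * (N : ℝ) ^ 2)) (dtil N ρ Δ)) ^ 2 / (24 * (N : ℝ))) = _
  rw [phi_eq hN hΔ]

set_option maxHeartbeats 2000000 in
/-- Quantitative removal of sequential weak compactness: there exist
`n ≤ Ψ(ε, Δ)` and `x ∈ F_N(p, Δ(n))` such that `⟪u - x, x_m - x⟫ ≤ ε` for
all `m ≥ n`. -/
theorem stmt15 {H : Type*} [NormedAddCommGroup H] [InnerProductSpace ℝ H]
    (C : Set H) (hCne : C.Nonempty) (hCconv : Convex ℝ C)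
    (T U : H → H) (hTmaps : Set.MapsTo T C C) (hUmaps : Set.MapsTo U C C)
    (hTne : ∀ x ∈ C, ∀ y ∈ C, ‖T x - T y‖ ≤ ‖x - y‖)
    (hUne : ∀ x ∈ C, ∀ y ∈ C, ‖U x - U y‖ ≤ ‖x - y‖)
    (p : H) (hp : p ∈ C) (hTp : T p = p) (hUp : U p = p)
    (u x₀ : H) (hu : u ∈ C) (hx₀ : x₀ ∈ C)
    (α β : ℕ → ℝ)
    (hα : ∀ n, α n ∈ Set.Icc (0 : ℝ) 1) (hβ : ∀ n, β n ∈ Set.Icc (0 : ℝ) 1)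
    (x : ℕ → H) (hx0 : x 0 = x₀)
    (hxodd : ∀ n, x (2 * n + 1) = (1 - α n) • T (x (2 * n)) + α n • u)
    (hxeven : ∀ n, x (2 * n + 2) = (1 - β n) • U (x (2 * n + 1)) + β n • x (2 * n + 1))
    (N : ℕ) (hN1 : 1 ≤ N)
    (hN : max ‖x₀ - p‖ (2 * ‖u - p‖) ≤ (N : ℝ))
    (ρ : ℝ → ℕ)
    (hρanti : ∀ ε ε' : ℝ, 0 < ε → ε ≤ ε' → ρ ε' ≤ ρ ε)
    (hρ : ∀ ε : ℝ, 0 < ε → ∀ n ≥ ρ ε, ‖x n - T (x n)‖ ≤ ε ∧ ‖x n - U (x n)‖ ≤ ε) :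
    ∀ ε : ℝ, 0 < ε → ∀ Δ : ℕ → ℝ, (∀ n, Δ n ∈ Set.Ioc (0 : ℝ) 1) →
      ∃ n ≤ Psi N ρ ε Δ, ∃ x' ∈ FN C T U N p (Δ n),
        ∀ m ≥ n, ⟪u - x', x m - x'⟫ ≤ ε := by
  intro ε hε Δ hΔ
  have hNR : (1:ℝ) ≤ (N:ℝ) := by exact_mod_cast hN1
  have hNpos : (0:ℝ) < N := by linarith
  have hup : ‖u - p‖ ≤ (N:ℝ)/2 := by
    have h := le_trans (le_max_right ‖x₀ - p‖ (2*‖u - p‖)) hN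
    linarith
  have hx0p : ‖x₀ - p‖ ≤ (N:ℝ) := le_trans (le_max_left _ _) hN
  -- boundedness of the iteration
  have hbound : ∀ m, x m ∈ C ∧ ‖x m - p‖ ≤ (N:ℝ) := by
    intro m
    induction m using Nat.strong_induction_on with
    | _ m ih =>
      rcases m with _ | k
      · rw [hx0]; exact ⟨hx₀, hx0p⟩
      · rcases Nat.even_or_odd k with ⟨n, hn⟩ | ⟨n, hn⟩
        · have hm : k + 1 = 2*n + 1 := by omega
          obtain ⟨hC2, hb2⟩ := ih (2*n) (by omega)
          obtain ⟨hα0, hα1⟩ := hα n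
          have hTC : T (x (2*n)) ∈ C := hTmaps hC2
          have hTb : ‖T (x (2*n)) - p‖ ≤ (N:ℝ) := by
            calc ‖T (x (2*n)) - p‖ = ‖T (x (2*n)) - T p‖ := by rw [hTp]
              _ ≤ ‖x (2*n) - p‖ := hTne _ hC2 _ hp
              _ ≤ _ := hb2
          rw [hm, hxodd n]
          refine ⟨hCconv hTC hu (by linarith) hα0 (by ring), ?_⟩
          have h1 : (1 - α n) • T (x (2*n)) + α n • u - p
              = (1 - α n) • (T (x (2*n)) - p) + α n • (u - p) := by
            module
          rw [h1]
          calc ‖(1 - α n) • (T (x (2*n)) - p) + α n • (u - p)‖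
              ≤ ‖(1 - α n) • (T (x (2*n)) - p)‖ + ‖α n • (u - p)‖ := norm_add_le _ _
            _ = (1 - α n) * ‖T (x (2*n)) - p‖ + α n * ‖u - p‖ := by
                rw [norm_smul, norm_smul, Real.norm_eq_abs, Real.norm_eq_abs,
                  abs_of_nonneg (by linarith), abs_of_nonneg hα0]
            _ ≤ (N:ℝ) := by nlinarith [norm_nonneg (u - p), norm_nonneg (T (x (2*n)) - p)]
        · have hm : k + 1 = 2*n + 2 := by omega
          obtain ⟨hC2, hb2⟩ := ih (2*n+1) (by omega)
          obtain ⟨hβ0, hβ1⟩ := hβ n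
          have hUC : U (x (2*n+1)) ∈ C := hUmaps hC2
          have hUb : ‖U (x (2*n+1)) - p‖ ≤ (N:ℝ) := by
            calc ‖U (x (2*n+1)) - p‖ = ‖U (x (2*n+1)) - U p‖ := by rw [hUp]
              _ ≤ ‖x (2*n+1) - p‖ := hUne _ hC2 _ hp
              _ ≤ _ := hb2
          rw [hm, hxeven n]
          refine ⟨hCconv hUC hC2 (by linarith) hβ0 (by ring), ?_⟩
          have h1 : (1 - β n) • U (x (2*n+1)) + β n • x (2*n+1) - p
              = (1 - β n) • (U (x (2*n+1)) - p) + β n • (x (2*n+1) - p) := by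
            module
          rw [h1]
          calc ‖(1 - β n) • (U (x (2*n+1)) - p) + β n • (x (2*n+1) - p)‖
              ≤ ‖(1 - β n) • (U (x (2*n+1)) - p)‖ + ‖β n • (x (2*n+1) - p)‖ := norm_add_le _ _
            _ = (1 - β n) * ‖U (x (2*n+1)) - p‖ + β n * ‖x (2*n+1) - p‖ := by
                rw [norm_smul, norm_smul, Real.norm_eq_abs, Real.norm_eq_abs,
                  abs_of_nonneg (by linarith), abs_of_nonneg hβ0]
            _ ≤ (N:ℝ) := by
                nlinarith [norm_nonneg (U (x (2*n+1)) - p), norm_nonneg (x (2*n+1) - p)]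
  by_contra hGoal
  push_neg at hGoal
  have hpFN : ∀ η : ℝ, 0 ≤ η → p ∈ FN C T U N p η := by
    intro η hη
    refine ⟨hp, ?_, ?_, ?_⟩
    · rw [hTp, sub_self, norm_zero]; exact hη
    · rw [hUp, sub_self, norm_zero]; exact hη
    · rw [sub_self, norm_zero]; linarith
  rcases le_or_gt ((N:ℝ)^2/2) ε with hbig | hsmall
  · -- large ε: stage 0 with x' = p gives an immediate contradiction
    obtain ⟨m, hm, hv⟩ := hGoal 0 (Nat.zero_le _) p (hpFN _ (hΔ 0).1.le)
    have hin := real_inner_le_norm (u - p) (x m - p)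
    have hb := (hbound m).2
    nlinarith [norm_nonneg (u - p), norm_nonneg (x m - p)]
  -- main case : ε < N²/2
  have hq0 : ∀ j, 0 < cseq N ρ Δ j := fun j => (cseq_mem hNR hΔ j).1
  have hq1 : ∀ j, cseq N ρ Δ j ≤ 1 := fun j => (cseq_mem hNR hΔ j).2
  have hPsiEq0 : Psi N ρ ε Δ
      = ρ ((cseq N ρ Δ ⌈(N : ℝ) ^ 2 / (4 * (ε ^ 2 / (4 * (N : ℝ) ^ 2)))⌉₊) ^ 2
          / (24 * (N : ℝ))) := psi_eq hNR hΔ ε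
  have hRge : (N : ℝ) ^ 2 / (4 * (ε ^ 2 / (4 * (N : ℝ) ^ 2)))
      ≤ (⌈(N : ℝ) ^ 2 / (4 * (ε ^ 2 / (4 * (N : ℝ) ^ 2)))⌉₊ : ℝ) := Nat.le_ceil _
  set R : ℕ := ⌈(N : ℝ) ^ 2 / (4 * (ε ^ 2 / (4 * (N : ℝ) ^ 2)))⌉₊ with hRdef
  set εt : ℝ := ε ^ 2 / (4 * (N:ℝ) ^ 2) with hεtdef
  have hεtpos : 0 < εt := by rw [hεtdef]; positivity
  set t : ℝ := ε / (4 * (N:ℝ) ^ 2) with htdef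
  have ht0 : 0 < t := by rw [htdef]; positivity
  have ht1 : t ≤ 1 := by
    rw [htdef, div_le_one (by positivity)]
    nlinarith
  -- from the negated goal: at every admissible stage there is a "violating" index
  have viol : ∀ i ≤ R, ∀ a : H, a ∈ C → ‖a - p‖ ≤ (N:ℝ) →
      ‖a - T a‖ ≤ cseq N ρ Δ (R - i + 1) → ‖a - U a‖ ≤ cseq N ρ Δ (R - i + 1) →
      ∃ m ≥ ρ ((cseq N ρ Δ (R - i)) ^ 2 / (24 * (N:ℝ))),
        ε < ⟪u - a, x m - a⟫ := by
    intro i hiR a haC hap haT haU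
    have hΔle : cseq N ρ Δ (R - i + 1) ≤ Δ (ρ ((cseq N ρ Δ (R - i)) ^ 2 / (24 * (N:ℝ)))) :=
      cseq_succ_le_delta N ρ Δ (R - i)
    have hle : ρ ((cseq N ρ Δ (R - i)) ^ 2 / (24 * (N:ℝ))) ≤ Psi N ρ ε Δ := by
      rw [hPsiEq0]
      apply hρanti
      · exact div_pos (pow_pos (hq0 R) 2) (by linarith)
      · have hcle : cseq N ρ Δ R ≤ cseq N ρ Δ (R - i) := cseq_anti hNR hΔ (Nat.sub_le R i)
        have hsq : (cseq N ρ Δ R)^2 ≤ (cseq N ρ Δ (R - i))^2 :=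
          pow_le_pow_left₀ (hq0 R).le hcle 2
        exact div_le_div_of_nonneg_right hsq (by linarith)
    exact hGoal _ hle a ⟨haC, le_trans haT hΔle, le_trans haU hΔle, hap⟩
  -- convex combinations of approximate fixed points stay approximately fixed
  have hcomb : ∀ S : H → H, Set.MapsTo S C C →
      (∀ y ∈ C, ∀ z ∈ C, ‖S y - S z‖ ≤ ‖y - z‖) →
      ∀ a ∈ C, ∀ b ∈ C, ∀ η : ℝ, 0 < η → η ≤ 1 →
        ‖a - S a‖ ≤ η → ‖b - S b‖ ≤ η → ‖a - b‖ ≤ 2*(N:ℝ) →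
        ‖((1-t)•a + t•b) - S ((1-t)•a + t•b)‖^2 ≤ 3*(N:ℝ)*η := by
    intro S hSmaps hSne a ha b hb η hη0 hη1 haS hbS hab
    have hcC : ((1-t)•a + t•b) ∈ C := hCconv ha hb (by linarith) ht0.le (by ring)
    have hca : ‖((1-t)•a + t•b) - a‖ = t * ‖a - b‖ := by
      have h : ((1-t)•a + t•b) - a = t • (b - a) := by
        module
      rw [h, norm_smul, Real.norm_eq_abs, abs_of_nonneg ht0.le, norm_sub_rev]
    have hcb : ‖((1-t)•a + t•b) - b‖ = (1-t) * ‖a - b‖ := by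
      have h : ((1-t)•a + t•b) - b = (1-t) • (a - b) := by
        module
      rw [h, norm_smul, Real.norm_eq_abs, abs_of_nonneg (by linarith)]
    apply approx_combo (S ((1-t)•a + t•b)) a b t η (N:ℝ) ht0.le ht1 hη0.le hη1 hNR hab
    · calc ‖S ((1-t)•a + t•b) - a‖
          ≤ ‖S ((1-t)•a + t•b) - S a‖ + ‖S a - a‖ := by
            have h : S ((1-t)•a + t•b) - a
                = (S ((1-t)•a + t•b) - S a) + (S a - a) := by abel
            rw [h]; exact norm_add_le _ _
        _ ≤ ‖((1-t)•a + t•b) - a‖ + η := by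
            refine add_le_add (hSne _ hcC _ ha) ?_
            rw [norm_sub_rev]; exact haS
        _ = t * ‖a - b‖ + η := by rw [hca]
    · calc ‖S ((1-t)•a + t•b) - b‖
          ≤ ‖S ((1-t)•a + t•b) - S b‖ + ‖S b - b‖ := by
            have h : S ((1-t)•a + t•b) - b
                = (S ((1-t)•a + t•b) - S b) + (S b - b) := by abel
            rw [h]; exact norm_add_le _ _
        _ ≤ ‖((1-t)•a + t•b) - b‖ + η := by
            refine add_le_add (hSne _ hcC _ hb) ?_
            rw [norm_sub_rev]; exact hbS
        _ = (1-t) * ‖a - b‖ + η := by rw [hcb]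
  -- the iterative construction
  have hstage : ∀ i, i ≤ R → ∃ a, a ∈ C ∧ ‖a - p‖ ≤ (N:ℝ) ∧
      ‖a - T a‖ ≤ cseq N ρ Δ (R - i + 1) ∧ ‖a - U a‖ ≤ cseq N ρ Δ (R - i + 1) ∧
      ‖u - a‖^2 ≤ (N:ℝ)^2/4 - i * εt := by
    intro i
    induction i with
    | zero =>
      intro _
      refine ⟨p, hp, ?_, ?_, ?_, ?_⟩
      · rw [sub_self, norm_zero]; linarith
      · rw [hTp, sub_self, norm_zero]; exact (hq0 _).le
      · rw [hUp, sub_self, norm_zero]; exact (hq0 _).le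
      · push_cast
        nlinarith [norm_nonneg (u - p)]
    | succ i ih =>
      intro hiR
      obtain ⟨a, haC, hap, haT, haU, haE⟩ := ih (by omega)
      obtain ⟨m, hm, hviol⟩ := viol i (by omega) a haC hap haT haU
      obtain ⟨hxmC, hxmp⟩ := hbound m
      set η : ℝ := (cseq N ρ Δ (R - i)) ^ 2 / (24 * (N:ℝ)) with hηdef
      have hηpos : 0 < η := div_pos (pow_pos (hq0 _) 2) (by linarith)
      have hη1 : η ≤ 1 := by
        rw [hηdef, div_le_one (by linarith)]
        nlinarith [hq0 (R - i), hq1 (R - i)]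
      obtain ⟨hxmT, hxmU⟩ := hρ η hηpos m hm
      have haT' : ‖a - T a‖ ≤ η := le_trans haT (cseq_succ_le_sq N ρ Δ (R - i))
      have haU' : ‖a - U a‖ ≤ η := le_trans haU (cseq_succ_le_sq N ρ Δ (R - i))
      have hab : ‖a - x m‖ ≤ 2*(N:ℝ) := by
        calc ‖a - x m‖ = ‖(a - p) - (x m - p)‖ := by
              rw [show a - x m = (a - p) - (x m - p) from by abel]
          _ ≤ ‖a - p‖ + ‖x m - p‖ := norm_sub_le _ _
          _ ≤ 2*(N:ℝ) := by linarith
      have hidx : R - (i+1) + 1 = R - i := by omega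
      have hTsq := hcomb T hTmaps hTne a haC (x m) hxmC η hηpos hη1 haT' hxmT hab
      have hUsq := hcomb U hUmaps hUne a haC (x m) hxmC η hηpos hη1 haU' hxmU hab
      have h3N : 3*(N:ℝ)*η = (cseq N ρ Δ (R - i))^2/8 := by
        rw [hηdef]; field_simp; ring
      refine ⟨(1-t)•a + t•(x m), hCconv haC hxmC (by linarith) ht0.le (by ring),
        ?_, ?_, ?_, ?_⟩
      · have h : (1-t)•a + t•(x m) - p = (1-t)•(a - p) + t•(x m - p) := by
          module
        rw [h]
        calc ‖(1-t)•(a-p) + t•(x m - p)‖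
            ≤ ‖(1-t)•(a-p)‖ + ‖t•(x m - p)‖ := norm_add_le _ _
          _ = (1-t)*‖a-p‖ + t*‖x m - p‖ := by
              rw [norm_smul, norm_smul, Real.norm_eq_abs, Real.norm_eq_abs,
                abs_of_nonneg (by linarith), abs_of_nonneg ht0.le]
          _ ≤ (N:ℝ) := by nlinarith [norm_nonneg (a - p), norm_nonneg (x m - p)]
      · rw [hidx]
        nlinarith [norm_nonneg ((1-t)•a + t•(x m) - T ((1-t)•a + t•(x m))),
          hq0 (R - i), mul_pos (hq0 (R - i)) (hq0 (R - i))]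
      · rw [hidx]
        nlinarith [norm_nonneg ((1-t)•a + t•(x m) - U ((1-t)•a + t•(x m))),
          hq0 (R - i), mul_pos (hq0 (R - i)) (hq0 (R - i))]
      · have hid := energy_identity u a (x m) t
        have hxa2 : ‖x m - a‖^2 ≤ (2*(N:ℝ))^2 := by
          apply pow_le_pow_left₀ (norm_nonneg _)
          rw [norm_sub_rev]; exact hab
        have hN0 : (N:ℝ) ≠ 0 := by positivity
        have hkey : 2*t*ε - t^2*(2*(N:ℝ))^2 = εt := by
          rw [htdef, hεtdef]; field_simp; ring
        push_cast
        nlinarith [mul_le_mul_of_nonneg_left hxa2 (sq_nonneg t),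
          mul_lt_mul_of_pos_left hviol ht0]
  -- final contradiction
  obtain ⟨a, haC, hap, haT, haU, haE⟩ := hstage R le_rfl
  have hEneg : ‖u - a‖^2 ≤ 0 := by
    have h1 : (N:ℝ)^2/4 ≤ R * εt := by
      rw [div_le_iff₀ (by positivity)] at hRge
      nlinarith
    linarith
  have hua : u - a = 0 := by
    have h := norm_nonneg (u - a)
    have h0 : ‖u - a‖ = 0 := by nlinarith
    exact norm_eq_zero.mp h0
  obtain ⟨m, hm, hviol⟩ := viol R le_rfl a haC hap haT haU
  rw [hua, inner_zero_left] at hviol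
  linarith
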